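/- Let B be a nonnegative selfadjoint bounded operator on a Hilbert space H. Then for every g ∈ H, the limit lim_{y↑0} ⟪(B - yI)⁻¹ g, g⟫ equals ‖B^{[-1/2]} g‖² if g ∈ ran B^{1/2}, and equals +∞ (the supremum over y<0 is infinite) if g ∉ ran B^{1/2}. -/

import Mathlib

open scoped ComplexOrder ComplexInnerProductSpace

set_option maxHeartbeats 1000000 in
/-- For a bounded nonnegative selfadjoint `B` (square root `sqB`) and `g ∈ H`, the limit
`lim_{y↑0} ⟪(B - y)⁻¹ g, g⟫` equals `‖B^{[-1/2]} g‖²` if `g ∈ ran B^{1/2}` (the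
pseudoinverse value being encoded by `v`), and the quantity tends to `+∞` if
`g ∉ ran B^{1/2}`. -/
theorem stmt_16 {H : Type*} [NormedAddCommGroup H] [InnerProductSpace ℂ H] [CompleteSpace H]
    (B : H →L[ℂ] H) (hsa : IsSelfAdjoint B) (hnn : ∀ f : H, 0 ≤ ⟪B f, f⟫)
    (sqB : H →L[ℂ] H)
    (hsq : IsSelfAdjoint sqB ∧ (∀ f : H, 0 ≤ ⟪sqB f, f⟫) ∧ sqB ∘L sqB = B)
    (R : ℝ → (H →L[ℂ] H))
    (hR : ∀ y : ℝ, y < 0 →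
      (B - (y : ℂ) • 1) ∘L R y = 1 ∧ R y ∘L (B - (y : ℂ) • 1) = 1)
    (g : H) :
    (∀ v : H, sqB v = g → (∀ u : H, sqB u = 0 → ⟪v, u⟫ = 0) →
      Filter.Tendsto (fun y => (⟪R y g, g⟫).re) (nhdsWithin 0 (Set.Iio (0 : ℝ)))
        (nhds (‖v‖ ^ 2))) ∧
    (g ∉ Set.range (sqB : H → H) →
      Filter.Tendsto (fun y => (⟪R y g, g⟫).re) (nhdsWithin 0 (Set.Iio (0 : ℝ)))
        Filter.atTop) := by
  obtain ⟨hsqsa, hsqnn, hsqB⟩ := hsq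
  have hsqB' : sqB * sqB = B := hsqB
  -- moving a selfadjoint operator across the inner product
  have sqB_move : ∀ x z : H, ⟪sqB x, z⟫ = ⟪x, sqB z⟫ := by
    intro x z
    conv_lhs => rw [← ContinuousLinearMap.isSelfAdjoint_iff'.mp hsqsa]
    exact ContinuousLinearMap.adjoint_inner_left sqB z x
  have hBre : ∀ f : H, 0 ≤ (⟪B f, f⟫).re := fun f => by
    simpa using (Complex.le_def.mp (hnn f)).1
  -- resolvent basic facts, for y < 0
  have hApp : ∀ y : ℝ, y < 0 → ∀ u : H, (B - (y:ℂ) • 1) (R y u) = u := by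
    intro y hy u
    have := congrArg (fun T : H →L[ℂ] H => T u) (hR y hy).1
    simpa using this
  have hApp' : ∀ y : ℝ, y < 0 → ∀ u : H, R y ((B - (y:ℂ) • 1) u) = u := by
    intro y hy u
    have := congrArg (fun T : H →L[ℂ] H => T u) (hR y hy).2
    simpa using this
  -- commutation of R y with sqB
  have hRs : ∀ y : ℝ, y < 0 → ∀ x : H, R y (sqB x) = sqB (R y x) := by
    intro y hy
    have h1 : (B - (y:ℂ) • 1) * R y = 1 := (hR y hy).1
    have h2 : R y * (B - (y:ℂ) • 1) = 1 := (hR y hy).2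
    have hAs : sqB * (B - (y:ℂ) • 1) = (B - (y:ℂ) • 1) * sqB := by
      have hb : sqB * B = B * sqB := by rw [← hsqB', mul_assoc]
      rw [mul_sub, sub_mul, hb, mul_smul_comm, smul_mul_assoc, mul_one, one_mul]
    have key : R y * sqB = sqB * R y := by
      calc R y * sqB = R y * sqB * ((B - (y:ℂ) • 1) * R y) := by rw [h1, mul_one]
        _ = R y * (sqB * (B - (y:ℂ) • 1)) * R y := by simp only [mul_assoc]
        _ = R y * ((B - (y:ℂ) • 1) * sqB) * R y := by rw [hAs]
        _ = R y * (B - (y:ℂ) • 1) * (sqB * R y) := by simp only [mul_assoc]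
        _ = sqB * R y := by rw [h2, one_mul]
    intro x
    have := congrArg (fun T : H →L[ℂ] H => T x) key
    simpa using this
  -- norm bound for the resolvent
  have hnormR : ∀ y : ℝ, y < 0 → ∀ u : H, (-y) * ‖R y u‖ ≤ ‖u‖ := by
    intro y hy u
    have hAf : B (R y u) - (y:ℂ) • (R y u) = u := by
      have := hApp y hy u
      simpa [ContinuousLinearMap.sub_apply] using this
    have hre : (-y) * ‖R y u‖ ^ 2 ≤ (⟪u, R y u⟫).re := by
      set f := R y u with hf
      rw [show (⟪u, f⟫ : ℂ) = ⟪B f - (y:ℂ) • f, f⟫ by rw [hAf]]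
      rw [inner_sub_left, inner_smul_left, Complex.sub_re]
      have h0 := hBre f
      have hself : (⟪f, f⟫ : ℂ) = ((‖f‖ : ℂ)) ^ 2 := inner_self_eq_norm_sq_to_K _
      rw [hself]
      simp only [Complex.conj_ofReal]
      have : ((y:ℂ) * (‖f‖:ℂ) ^ 2).re = y * ‖f‖ ^ 2 := by
        rw [← Complex.ofReal_pow, Complex.re_ofReal_mul, Complex.ofReal_re]
      rw [this]
      linarith
    have hcs : (⟪u, R y u⟫).re ≤ ‖u‖ * ‖R y u‖ := by
      calc (⟪u, R y u⟫).re ≤ ‖⟪u, R y u⟫‖ := Complex.re_le_norm _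
        _ = ‖⟪u, R y u⟫‖ := rfl
        _ ≤ ‖u‖ * ‖R y u‖ := norm_inner_le_norm _ _
    rcases eq_or_lt_of_le (norm_nonneg (R y u)) with h0 | h0
    · rw [← h0, mul_zero]; positivity
    · nlinarith
  constructor
  · -- first part
    intro v hv hvperp
    -- v lies in the closure of the range of B
    have hv_cl : v ∈ closure (Set.range (B : H → H)) := by
      have hKv : v ∈ (LinearMap.range (B : H →ₗ[ℂ] H))ᗮᗮ := by
        rw [Submodule.mem_orthogonal]
        intro u hu
        rw [Submodule.mem_orthogonal] at hu
        have h1 : ⟪B u, u⟫ = 0 := hu (B u) (LinearMap.mem_range.mpr ⟨u, rfl⟩)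
        have h2 : sqB u = 0 := by
          rw [← inner_self_eq_zero (𝕜 := ℂ) (x := sqB u), sqB_move u (sqB u)]
          have hs : sqB (sqB u) = B u := by
            have := congrArg (fun T : H →L[ℂ] H => T u) hsqB
            simpa using this
          rw [hs, ← inner_conj_symm u (B u), h1, map_zero]
        have h3 := hvperp u h2
        rw [← inner_conj_symm u v, h3, map_zero]
      rw [Submodule.orthogonal_orthogonal_eq_closure] at hKv
      have hset : ((LinearMap.range (B : H →ₗ[ℂ] H) : Submodule ℂ H) : Set H)
          = Set.range (B : H → H) := by
        ext x; simp [LinearMap.mem_range]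
      have h4 : v ∈ closure ((LinearMap.range (B : H →ₗ[ℂ] H) : Submodule ℂ H) : Set H) := by
        rw [← Submodule.topologicalClosure_coe]
        exact hKv
      rwa [hset] at h4
    have hPhi : Filter.Tendsto (fun y : ℝ => (y:ℂ) • R y v) (nhdsWithin 0 (Set.Iio (0:ℝ))) (nhds 0) := by
      rw [NormedAddCommGroup.tendsto_nhds_zero]
      intro ε hε
      obtain ⟨w, hw⟩ : ∃ w : H, ‖v - B w‖ < ε/2 := by
        rw [Metric.mem_closure_iff] at hv_cl
        obtain ⟨x, hx, hd⟩ := hv_cl (ε/2) (by positivity)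
        obtain ⟨w, rfl⟩ := hx
        exact ⟨w, by rwa [dist_eq_norm] at hd⟩
      have hδ : 0 < ε / (2 * (2*‖w‖ + 1)) := by positivity
      have hmem : Set.Iio (0:ℝ) ∩ Metric.ball 0 (ε / (2 * (2*‖w‖ + 1))) ∈
          nhdsWithin 0 (Set.Iio (0:ℝ)) :=
        Filter.inter_mem self_mem_nhdsWithin (nhdsWithin_le_nhds (Metric.ball_mem_nhds 0 hδ))
      filter_upwards [hmem] with y hy
      obtain ⟨hy0, hyb⟩ := hy
      have hyabs : |y| < ε / (2 * (2*‖w‖ + 1)) := by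
        simpa [Real.dist_eq] using hyb
      have e1 : R y (B w) = w + (y:ℂ) • R y w := by
        have hBw : B w = (B - (y:ℂ) • 1) w + (y:ℂ) • w := by
          simp [ContinuousLinearMap.sub_apply]
        rw [hBw, map_add, hApp' y hy0, map_smul]
      have hb1 : |y| * ‖R y (v - B w)‖ ≤ ‖v - B w‖ := by
        rw [abs_of_neg hy0]; exact hnormR y hy0 _
      have hb2 : ‖R y (B w)‖ ≤ 2 * ‖w‖ := by
        rw [e1]
        have h5 : ‖(y:ℂ) • R y w‖ = (-y) * ‖R y w‖ := by
          rw [norm_smul, Complex.norm_real, Real.norm_eq_abs, abs_of_neg hy0]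
        calc ‖w + (y:ℂ) • R y w‖ ≤ ‖w‖ + ‖(y:ℂ) • R y w‖ := norm_add_le _ _
          _ ≤ ‖w‖ + ‖w‖ := by rw [h5]; linarith [hnormR y hy0 w]
          _ = 2 * ‖w‖ := by ring
      have hsplit : ‖R y v‖ ≤ ‖R y (v - B w)‖ + ‖R y (B w)‖ := by
        calc ‖R y v‖ = ‖R y (v - B w) + R y (B w)‖ := by rw [← map_add, sub_add_cancel]
          _ ≤ _ := norm_add_le _ _
      have h3 : |y| * (2 * ‖w‖) < ε/2 := by
        have hpos : (0:ℝ) < 2*‖w‖+1 := by positivity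
        have h4 : |y| * (2*‖w‖+1) < (ε / (2 * (2*‖w‖ + 1))) * (2*‖w‖+1) :=
          mul_lt_mul_of_pos_right hyabs hpos
        have h5 : (ε / (2 * (2*‖w‖ + 1))) * (2*‖w‖+1) = ε/2 := by field_simp
        nlinarith [abs_nonneg y]
      calc ‖(y:ℂ) • R y v‖ = |y| * ‖R y v‖ := by
            rw [norm_smul, Complex.norm_real, Real.norm_eq_abs]
        _ ≤ |y| * (‖R y (v - B w)‖ + ‖R y (B w)‖) :=
            mul_le_mul_of_nonneg_left hsplit (abs_nonneg y)
        _ = |y| * ‖R y (v - B w)‖ + |y| * ‖R y (B w)‖ := by ring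
        _ ≤ ‖v - B w‖ + |y| * (2 * ‖w‖) :=
            add_le_add hb1 (mul_le_mul_of_nonneg_left hb2 (abs_nonneg y))
        _ < ε/2 + ε/2 := add_lt_add hw h3
        _ = ε := by ring
    have h2 : Filter.Tendsto (fun y : ℝ => (⟪(y:ℂ) • R y v, v⟫).re)
        (nhdsWithin 0 (Set.Iio (0:ℝ))) (nhds 0) := by
      have hc : Continuous fun x : H => (⟪x, v⟫ : ℂ).re :=
        Complex.continuous_re.comp (continuous_id.inner continuous_const)
      have := (hc.tendsto 0).comp hPhi
      rwa [inner_zero_left, Complex.zero_re] at this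
    have h3 : Filter.Tendsto (fun y : ℝ => ‖v‖^2 + (⟪(y:ℂ) • R y v, v⟫).re)
        (nhdsWithin 0 (Set.Iio (0:ℝ))) (nhds (‖v‖^2)) := by
      simpa using tendsto_const_nhds.add h2
    apply h3.congr'
    filter_upwards [self_mem_nhdsWithin] with y hy
    have hy0 : y < 0 := hy
    have hkey : sqB (R y (sqB v)) = v + (y:ℂ) • R y v := by
      have e1 : sqB (R y (sqB v)) = R y (B v) := by
        rw [← hRs y hy0 (sqB v)]
        congr 1
        have := congrArg (fun T : H →L[ℂ] H => T v) hsqB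
        simpa using this
      have e2 : B v = (B - (y:ℂ) • 1) v + (y:ℂ) • v := by
        simp [ContinuousLinearMap.sub_apply]
      rw [e1, e2, map_add, hApp' y hy0, map_smul]
    have hself : (⟪v, v⟫ : ℂ) = ((‖v‖ : ℂ)) ^ 2 := inner_self_eq_norm_sq_to_K _
    rw [← hv, ← sqB_move (R y (sqB v)) v, hkey, inner_add_left, Complex.add_re, hself,
      ← Complex.ofReal_pow, Complex.ofReal_re]
  · intro hg
    by_contra hnot
    obtain ⟨C, hC⟩ : ∃ C : ℝ, ∃ᶠ y in nhdsWithin 0 (Set.Iio (0:ℝ)), (⟪R y g, g⟫).re < C := by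
      by_contra hcon
      push_neg at hcon
      apply hnot
      rw [Filter.tendsto_atTop]
      intro b
      have hb := hcon b
      filter_upwards [hb] with y hy
      exact hy
    set C' : ℝ := max C 1 with hC'
    have hC'pos : 0 < C' := lt_of_lt_of_le one_pos (le_max_right _ _)
    have hfreq : ∃ᶠ y in nhdsWithin 0 (Set.Iio (0:ℝ)), (⟪R y g, g⟫).re < C' :=
      hC.mono (fun y hy => lt_of_lt_of_le hy (le_max_left _ _))
    have hbound : ∀ h : H, ‖(⟪g, h⟫ : ℂ)‖ ≤ Real.sqrt C' * ‖sqB h‖ := by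
      intro h
      refine le_of_forall_pos_le_add ?_
      intro ε hε
      set δ : ℝ := ε^2 / ((‖h‖+1)^2 * C') with hδdef
      have hδpos : 0 < δ := by positivity
      have hmem : Set.Iio (0:ℝ) ∩ Metric.ball 0 δ ∈ nhdsWithin 0 (Set.Iio (0:ℝ)) :=
        Filter.inter_mem self_mem_nhdsWithin (nhdsWithin_le_nhds (Metric.ball_mem_nhds 0 hδpos))
      obtain ⟨y, hyC, hy0, hyb⟩ : ∃ y, (⟪R y g, g⟫).re < C' ∧ y < 0 ∧ |y| < δ := by
        have := (hfreq.and_eventually (Filter.eventually_of_mem hmem (fun x hx => hx))).exists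
        obtain ⟨y, h1, h2, h3⟩ := this
        exact ⟨y, h1, h2, by simpa [Real.dist_eq] using h3⟩
      set f := R y g with hf
      have hAf : B f - (y:ℂ) • f = g := by
        have := hApp y hy0 g
        simpa [ContinuousLinearMap.sub_apply] using this
      have hBf : sqB (sqB f) = B f := by
        have := congrArg (fun T : H →L[ℂ] H => T f) hsqB
        simpa using this
      have hfy : (⟪f, g⟫ : ℂ).re = (⟪B f, f⟫).re + (-y) * ‖f‖^2 := by
        conv_lhs => rw [show g = B f - (y:ℂ) • f from hAf.symm]
        have hself : (⟪f, f⟫ : ℂ) = ((‖f‖ : ℂ)) ^ 2 := inner_self_eq_norm_sq_to_K _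
        rw [inner_sub_right, inner_smul_right, Complex.sub_re, hself]
        have h1 : (⟪f, B f⟫ : ℂ).re = (⟪B f, f⟫).re := by
          rw [← inner_conj_symm f (B f)]; exact Complex.conj_re _
        have h2' : ((y:ℂ) * ((‖f‖:ℂ)) ^ 2).re = y * ‖f‖ ^ 2 := by
          rw [← Complex.ofReal_pow, Complex.re_ofReal_mul, Complex.ofReal_re]
        rw [h1, h2']
        ring
      have hfyre : (⟪f, g⟫ : ℂ).re = (⟪R y g, g⟫).re := by rw [hf]
      have hsf : (⟪B f, f⟫ : ℂ).re = ‖sqB f‖^2 := by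
        have hself : (⟪sqB f, sqB f⟫ : ℂ) = ((‖sqB f‖ : ℂ)) ^ 2 := inner_self_eq_norm_sq_to_K _
        rw [← hBf, sqB_move (sqB f) f, hself, ← Complex.ofReal_pow, Complex.ofReal_re]
      have hsfC : ‖sqB f‖ ≤ Real.sqrt C' := by
        have h5 : ‖sqB f‖^2 ≤ C' := by
          have h6 : (0:ℝ) ≤ (-y) * ‖f‖^2 := mul_nonneg (by linarith) (by positivity)
          nlinarith [hfy, hfyre, hyC]
        have := Real.sqrt_le_sqrt h5
        rwa [Real.sqrt_sq (norm_nonneg _)] at this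
      have h2b : (-y) * ‖f‖ ≤ Real.sqrt ((-y) * C') := by
        have h5 : (-y) * ‖f‖^2 ≤ C' := by
          have := hBre f
          nlinarith [hfy, hfyre, hyC]
        have hy' : (0:ℝ) ≤ -y := by linarith
        have hsq : ((-y) * ‖f‖)^2 ≤ (-y) * C' := by
          calc ((-y) * ‖f‖)^2 = (-y) * ((-y) * ‖f‖^2) := by ring
            _ ≤ (-y) * C' := mul_le_mul_of_nonneg_left h5 hy'
        have := Real.sqrt_le_sqrt hsq
        rwa [Real.sqrt_sq (mul_nonneg hy' (norm_nonneg _))] at this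
      have hyC'b : Real.sqrt ((-y) * C') ≤ ε / (‖h‖ + 1) := by
        have h7 : (-y) * C' ≤ δ * C' := by
          have : -y ≤ δ := by rw [abs_of_neg hy0] at hyb; linarith
          exact mul_le_mul_of_nonneg_right this (le_of_lt hC'pos)
        have h8 : δ * C' = (ε / (‖h‖+1))^2 := by
          rw [hδdef]; field_simp
        have := Real.sqrt_le_sqrt (le_trans h7 (le_of_eq h8))
        rwa [Real.sqrt_sq (by positivity)] at this
      have hdec : (⟪g, h⟫ : ℂ) = ⟪sqB f, sqB h⟫ - (y:ℂ) * ⟪f, h⟫ := by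
        conv_lhs => rw [show g = B f - (y:ℂ) • f from hAf.symm]
        rw [inner_sub_left, inner_smul_left, Complex.conj_ofReal]
        congr 1
        rw [← hBf, sqB_move]
      calc ‖(⟪g, h⟫ : ℂ)‖ ≤ ‖(⟪sqB f, sqB h⟫ : ℂ)‖ + ‖(y:ℂ) * ⟪f, h⟫‖ := by
            rw [hdec]; exact norm_sub_le _ _
        _ ≤ ‖sqB f‖ * ‖sqB h‖ + (-y) * (‖f‖ * ‖h‖) := by
            have hn1 : ‖(⟪sqB f, sqB h⟫ : ℂ)‖ ≤ ‖sqB f‖ * ‖sqB h‖ := norm_inner_le_norm _ _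
            have hn2 : ‖(y:ℂ) * ⟪f, h⟫‖ ≤ (-y) * (‖f‖ * ‖h‖) := by
              rw [norm_mul, Complex.norm_real, Real.norm_eq_abs, abs_of_neg hy0]
              exact mul_le_mul_of_nonneg_left (norm_inner_le_norm _ _) (by linarith)
            exact add_le_add hn1 hn2
        _ ≤ Real.sqrt C' * ‖sqB h‖ + ε := by
            have hn1 : ‖sqB f‖ * ‖sqB h‖ ≤ Real.sqrt C' * ‖sqB h‖ :=
              mul_le_mul_of_nonneg_right hsfC (norm_nonneg _)
            have hn2 : (-y) * (‖f‖ * ‖h‖) ≤ ε := by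
              have h9 : (-y) * ‖f‖ * ‖h‖ ≤ (ε / (‖h‖ + 1)) * ‖h‖ :=
                mul_le_mul_of_nonneg_right (le_trans h2b hyC'b) (norm_nonneg _)
              have h10 : (ε / (‖h‖ + 1)) * ‖h‖ ≤ ε := by
                rw [div_mul_eq_mul_div, div_le_iff₀ (by positivity)]
                nlinarith [norm_nonneg h, hε]
              calc (-y) * (‖f‖ * ‖h‖) = (-y) * ‖f‖ * ‖h‖ := by ring
                _ ≤ ε := le_trans h9 h10
            linarith
    have hker : ∀ h : H, sqB h = 0 → (⟪g, h⟫ : ℂ) = 0 := fun h hh => by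
      have := hbound h
      rw [hh, norm_zero, mul_zero] at this
      exact norm_le_zero_iff.mp this
    have hwd : ∀ h h' : H, sqB h = sqB h' → (⟪g, h⟫ : ℂ) = ⟪g, h'⟫ := by
      intro h h' hhh
      have h1 : (⟪g, h - h'⟫ : ℂ) = 0 := hker _ (by rw [map_sub, hhh, sub_self])
      rw [inner_sub_right, sub_eq_zero] at h1
      exact h1
    set K : Submodule ℂ H := LinearMap.range (sqB : H →ₗ[ℂ] H) with hK
    have hpre : ∀ x : K, ∃ h : H, sqB h = (x : H) := fun x => LinearMap.mem_range.mp x.2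
    choose pre hpreS using hpre
    have hF0 : ∀ (h : H) (x : K), (x : H) = sqB h → (⟪g, pre x⟫ : ℂ) = ⟪g, h⟫ :=
      fun h x hx => hwd _ _ (by rw [hpreS x, hx])
    have hb : ∀ x : K, ‖(⟪g, pre x⟫ : ℂ)‖ ≤ Real.sqrt C' * ‖x‖ := by
      intro x
      have := hbound (pre x)
      rwa [hpreS x] at this
    set f₀ : K →ₗ[ℂ] ℂ :=
      { toFun := fun x => ⟪g, pre x⟫
        map_add' := by
          intro x z
          have he : (⟪g, pre (x + z)⟫ : ℂ) = ⟪g, pre x + pre z⟫ :=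
            hwd _ _ (by rw [map_add, hpreS x, hpreS z, hpreS (x+z), Submodule.coe_add])
          show (⟪g, pre (x + z)⟫ : ℂ) = ⟪g, pre x⟫ + ⟪g, pre z⟫
          rw [he, inner_add_right]
        map_smul' := by
          intro c x
          have he : (⟪g, pre (c • x)⟫ : ℂ) = ⟪g, c • pre x⟫ :=
            hwd _ _ (by rw [map_smul, hpreS x, hpreS (c • x), Submodule.coe_smul])
          show (⟪g, pre (c • x)⟫ : ℂ) = c • ⟪g, pre x⟫
          rw [he, inner_smul_right]
          simp } with hf₀
    set F : K →L[ℂ] ℂ := f₀.mkContinuous (Real.sqrt C') hb with hFdef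
    obtain ⟨F', hF'ext, -⟩ := exists_extension_norm_eq K F
    set vv := (InnerProductSpace.toDual ℂ H).symm F' with hvv
    have hvx : ∀ x : H, (⟪vv, x⟫ : ℂ) = F' x := fun x => InnerProductSpace.toDual_symm_apply
    have hfinal : sqB vv = g := by
      have hz : ∀ h : H, (⟪sqB vv - g, h⟫ : ℂ) = 0 := by
        intro h
        rw [inner_sub_left, sqB_move vv h, hvx (sqB h)]
        have hm : sqB h ∈ K := LinearMap.mem_range.mpr ⟨h, rfl⟩
        have he : F' (sqB h) = F ⟨sqB h, hm⟩ := hF'ext ⟨sqB h, hm⟩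
        have he2 : F ⟨sqB h, hm⟩ = (⟪g, h⟫ : ℂ) := hF0 h ⟨sqB h, hm⟩ rfl
        rw [he, he2, sub_self]
      have := hz (sqB vv - g)
      rw [inner_self_eq_zero] at this
      exact sub_eq_zero.mp this
    exact hg ⟨vv, hfinal⟩
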